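/- For every integer n ≥ 1, ⟨r_n, l_n⟩ = (−1)^{n+1} / (n(n+1)(n+2)), where the inner product is taken in L²(0,1). -/

import Mathlib

open MeasureTheory Set

noncomputable section

namespace OrthoPoly

/-- The space `L²(0,1)`. -/
abbrev L2I := Lp ℝ 2 (volume.restrict (Set.Ioo (0 : ℝ) 1))

open Classical in
/-- Interpret a plain function as an element of `L²(0,1)`. -/
def toL2I (f : ℝ → ℝ) : L2I :=
  if h : MemLp f 2 (volume.restrict (Set.Ioo (0 : ℝ) 1)) then h.toLp f else 0

/-- Orthogonal projection onto (the closure of) a subspace. -/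
def projC (K : Submodule ℝ L2I) (f : L2I) : L2I :=
  (Submodule.orthogonalProjection K.topologicalClosure f : L2I)

/-- `r(x) = x·χ_{[0,1)}(x)`. -/
def rI : L2I := toL2I fun x => Set.indicator (Set.Ico (0 : ℝ) 1) (fun y => y) x

/-- `l(x) = (1−x)·χ_{[0,1)}(x)`. -/
def lI : L2I := toL2I fun x => Set.indicator (Set.Ico (0 : ℝ) 1) (fun y => 1 - y) x

/-- `U_n = {x(1−x)p(x)·χ_{[0,1)}(x) : deg p ≤ n−2}` for `n ≥ 2`, and `U_1 = {0}`. -/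
def Usub (n : ℕ) : Submodule ℝ L2I :=
  Submodule.span ℝ
    {f | ∃ p : Polynomial ℝ, (p = 0 ∨ p.natDegree + 2 ≤ n) ∧
      f = toL2I fun x => Set.indicator (Set.Ico (0 : ℝ) 1)
        (fun y => y * (1 - y) * p.eval y) x}

end OrthoPoly

namespace OrthoPolyAux

open Polynomial OrthoPoly

/-! ### Integrals of polynomials on `[0,1]` -/

noncomputable def PI (P : ℝ[X]) : ℝ := ∫ x in (0:ℝ)..1, P.eval x

lemma PI_derivative (P : ℝ[X]) : PI (derivative P) = P.eval 1 - P.eval 0 := by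
  unfold PI
  rw [intervalIntegral.integral_deriv_eq_sub' (fun x => P.eval x)
    (funext fun x => P.deriv) (fun x _ => P.differentiableAt)
    (P.derivative.continuousOn)]

lemma PI_intable (P : ℝ[X]) : IntervalIntegrable (fun x => P.eval x) volume 0 1 :=
  P.continuous.intervalIntegrable _ _

lemma PI_add (P Q : ℝ[X]) : PI (P + Q) = PI P + PI Q := by
  unfold PI
  simp only [eval_add]
  exact intervalIntegral.integral_add (PI_intable P) (PI_intable Q)

lemma PI_smul (c : ℝ) (P : ℝ[X]) : PI (C c * P) = c * PI P := by
  unfold PI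
  simp only [eval_mul, eval_C]
  exact intervalIntegral.integral_const_mul c _

lemma PI_sub (P Q : ℝ[X]) : PI (P - Q) = PI P - PI Q := by
  unfold PI
  simp only [eval_sub]
  exact intervalIntegral.integral_sub (PI_intable P) (PI_intable Q)

lemma PI_zero : PI 0 = 0 := by simp [PI]

lemma PI_ibp (A B : ℝ[X]) : PI (derivative A * B) =
    A.eval 1 * B.eval 1 - A.eval 0 * B.eval 0 - PI (A * derivative B) := by
  have h := PI_derivative (A * B)
  rw [derivative_mul, PI_add] at h
  simp only [eval_mul] at h
  linarith

/-! ### The Rodrigues-type polynomial -/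

noncomputable def GG (n : ℕ) : ℝ[X] := X^n * (1 - X)^n * (C (n:ℝ) * X + 1)

lemma GG_ne_zero (n : ℕ) : GG n ≠ 0 := by
  intro h
  have := congrArg (Polynomial.eval (1/2 : ℝ)) h
  simp only [GG, eval_mul, eval_pow, eval_add, eval_one, eval_C, eval_X, eval_sub,
    eval_zero] at this
  norm_num at this
  nlinarith [this, pow_pos (show (0:ℝ) < 1/2 by norm_num) n]

lemma GG_root0 (n : ℕ) : (n:ℕ) ≤ (GG n).rootMultiplicity 0 := by
  rw [Polynomial.le_rootMultiplicity_iff (GG_ne_zero n)]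
  rw [map_zero, sub_zero]
  exact ⟨(1 - X)^n * (C (n:ℝ) * X + 1), by rw [GG]; ring⟩

lemma GG_root1 (n : ℕ) : (n:ℕ) ≤ (GG n).rootMultiplicity 1 := by
  rw [Polynomial.le_rootMultiplicity_iff (GG_ne_zero n)]
  rw [map_one]
  have h : ((1:ℝ[X]) - X)^n = (-1)^n * (X - 1)^n := by
    rw [← neg_sub X 1, neg_pow]
  exact ⟨(-1)^n * (X^n * (C (n:ℝ) * X + 1)), by rw [GG, h]; ring⟩

lemma GG_vanish0 (n j : ℕ) (hj : j < n) : (Polynomial.derivative^[j] (GG n)).eval 0 = 0 :=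
  Polynomial.isRoot_iterate_derivative_of_lt_rootMultiplicity (lt_of_lt_of_le hj (GG_root0 n))

lemma GG_vanish1 (n j : ℕ) (hj : j < n) : (Polynomial.derivative^[j] (GG n)).eval 1 = 0 :=
  Polynomial.isRoot_iterate_derivative_of_lt_rootMultiplicity (lt_of_lt_of_le hj (GG_root1 n))

lemma GG_natDegree (n : ℕ) : (GG n).natDegree ≤ 2*n+1 := by
  unfold GG
  apply le_trans (natDegree_mul_le)
  have h1 : (X^n * (1-X)^n : ℝ[X]).natDegree ≤ 2*n := by
    apply le_trans (natDegree_mul_le)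
    have : ((1:ℝ[X]) - X).natDegree ≤ 1 :=
      le_trans (natDegree_sub_le _ _) (by simp)
    calc (X^n : ℝ[X]).natDegree + ((1-X)^n : ℝ[X]).natDegree
        ≤ n + n := by
          gcongr
          · exact natDegree_X_pow_le n
          · exact le_trans (natDegree_pow_le) (by nlinarith)
      _ = 2*n := by ring
  have h2 : ((C (n:ℝ)) * X + 1 : ℝ[X]).natDegree ≤ 1 := by
    apply le_trans (natDegree_add_le _ _)
    simp only [natDegree_one, max_le_iff]
    constructor
    · exact le_trans (natDegree_mul_le) (by simp)
    · omega
  omega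

/-! ### Orthogonality via iterated integration by parts -/

lemma GG_ortho_aux (n : ℕ) (q : ℝ[X]) (h0 : q.eval 0 = 0) (h1 : q.eval 1 = 0)
    (k : ℕ) (hk : k ≤ n + 1) :
    PI (Polynomial.derivative^[n+1] (GG n) * q) =
      (-1)^k * PI (Polynomial.derivative^[n+1-k] (GG n) * Polynomial.derivative^[k] q) := by
  induction k with
  | zero => simp
  | succ k ih =>
    rw [ih (by omega)]
    have hrw : Polynomial.derivative^[n+1-k] (GG n)
        = derivative (Polynomial.derivative^[n-k] (GG n)) := by
      rw [show n + 1 - k = (n - k) + 1 by omega, Function.iterate_succ_apply']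
    rw [hrw, PI_ibp, show n + 1 - (k + 1) = n - k by omega]
    have hb : (Polynomial.derivative^[n-k] (GG n)).eval 1 * (Polynomial.derivative^[k] q).eval 1
        - (Polynomial.derivative^[n-k] (GG n)).eval 0
          * (Polynomial.derivative^[k] q).eval 0 = 0 := by
      rcases Nat.eq_zero_or_pos k with hk0 | hk0
      · subst hk0; simp [h0, h1]
      · rw [GG_vanish0 n _ (by omega), GG_vanish1 n _ (by omega)]; ring
    rw [hb, ← Function.iterate_succ_apply' Polynomial.derivative k q]
    ring_nf
    rw [show 1 + k = k.succ by omega]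

lemma GG_ortho (n : ℕ) (q : ℝ[X]) (hdeg : q.natDegree ≤ n)
    (h0 : q.eval 0 = 0) (h1 : q.eval 1 = 0) :
    PI (Polynomial.derivative^[n+1] (GG n) * q) = 0 := by
  rw [GG_ortho_aux n q h0 h1 (n+1) le_rfl]
  rw [Polynomial.iterate_derivative_eq_zero (p := q) (by omega), mul_zero, PI_zero, mul_zero]

/-! ### Coefficient and evaluation facts for `GG` -/

lemma coeff_one_eq (H : ℝ[X]) : H.coeff 1 = (derivative H).eval 0 := by
  rw [← coeff_zero_eq_eval_zero, coeff_derivative]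
  simp

lemma GG_coeff_n1 (n : ℕ) : (GG n).coeff (n+1) = 0 := by
  have h : GG n = X^n * ((1 - X)^n * (C (n:ℝ) * X + 1)) := by rw [GG, mul_assoc]
  rw [h, show n + 1 = 1 + n by omega, coeff_X_pow_mul, coeff_one_eq]
  simp only [derivative_mul, derivative_pow, derivative_sub, derivative_one, derivative_X,
    derivative_C, derivative_add, derivative_mul, zero_sub, mul_neg, eval_add, eval_mul,
    eval_pow, eval_sub, eval_one, eval_X, eval_C, eval_neg, eval_natCast, zero_mul, mul_zero,
    eval_zero, add_zero, zero_add, one_pow, mul_one]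
  ring

lemma GG_coeff_n (n : ℕ) : (GG n).coeff n = 1 := by
  have h : GG n = X^n * ((1 - X)^n * (C (n:ℝ) * X + 1)) := by rw [GG, mul_assoc]
  have h2 := coeff_X_pow_mul ((1 - X)^n * (C (n:ℝ) * X + 1)) n 0
  rw [zero_add] at h2
  rw [h, h2, coeff_zero_eq_eval_zero]
  simp

lemma GG_taylor (n : ℕ) : (taylor 1 (GG n)).coeff (n+1) = (-1)^n * (n*(n+2)) := by
  have h : taylor 1 (GG n)
      = X^n * ((-1:ℝ[X])^n * ((X + C 1)^n * (C (n:ℝ) * X + C ((n:ℝ)+1)))) := by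
    rw [taylor_apply, GG]
    simp only [mul_comp, pow_comp, X_comp, sub_comp, one_comp, add_comp, C_comp]
    have : ((1:ℝ[X]) - (X + C 1))^n = (-1)^n * X^n := by
      rw [show (1:ℝ[X]) - (X + C 1) = -X by simp, neg_pow]
    rw [this]
    simp only [map_add, map_one]
    ring
  rw [h, show n + 1 = 1 + n by omega, coeff_X_pow_mul, coeff_one_eq]
  simp only [derivative_mul, derivative_pow, derivative_add, derivative_X, derivative_C,
    derivative_one, derivative_neg]
  simp only [neg_zero, zero_mul, mul_zero, eval_zero, add_zero, zero_add]
  simp only [eval_add, eval_mul, eval_pow, eval_neg, eval_one, eval_X, eval_C, mul_zero,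
    zero_add, add_zero, mul_one, zero_mul, eval_zero, one_pow]
  ring

lemma GG_D_eval0 (n : ℕ) : (Polynomial.derivative^[n+1] (GG n)).eval 0 = 0 := by
  rw [← coeff_zero_eq_eval_zero, Polynomial.coeff_iterate_derivative, zero_add, GG_coeff_n1]
  simp

lemma GG_Dn_eval0 (n : ℕ) : (Polynomial.derivative^[n] (GG n)).eval 0 = Nat.factorial n := by
  rw [← coeff_zero_eq_eval_zero, Polynomial.coeff_iterate_derivative, zero_add, GG_coeff_n,
    Nat.descFactorial_self]
  simp

lemma GG_D_eval1 (n : ℕ) :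
    (Polynomial.derivative^[n+1] (GG n)).eval 1
      = Nat.factorial (n+1) * ((-1)^n * (n*(n+2))) := by
  have h := congrFun (Polynomial.factorial_smul_hasseDeriv (R := ℝ) (n+1)) (GG n)
  rw [← h]
  have : ((Nat.factorial (n+1)) • Polynomial.hasseDeriv (n+1) : ℝ[X] →ₗ[ℝ] ℝ[X]) (GG n)
      = (Nat.factorial (n+1)) • (Polynomial.hasseDeriv (n+1) (GG n)) := by simp
  rw [this, Polynomial.eval_smul, ← Polynomial.taylor_coeff, GG_taylor]
  simp [nsmul_eq_mul]

/-! ### The residual polynomial `rho` -/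

noncomputable def kap (n : ℕ) : ℝ := (-1)^n / ((n:ℝ) * (n+2) * Nat.factorial (n+1))

noncomputable def rho (n : ℕ) : ℝ[X] := C (kap n) * Polynomial.derivative^[n+1] (GG n)

lemma rho_eval0 (n : ℕ) : (rho n).eval 0 = 0 := by
  rw [rho, eval_mul, eval_C, GG_D_eval0, mul_zero]

lemma rho_eval1 (n : ℕ) (hn : 1 ≤ n) : (rho n).eval 1 = 1 := by
  have hfac : (Nat.factorial (n+1) : ℝ) ≠ 0 := by positivity
  have hn0 : (n:ℝ) ≠ 0 := Nat.cast_ne_zero.2 (by omega)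
  rw [rho, eval_mul, eval_C, GG_D_eval1, kap]
  field_simp
  ring_nf
  have h2 : ((-1:ℝ))^(n*2) = 1 := by
    rw [mul_comm, pow_mul]
    norm_num
  rw [h2]

lemma rho_natDegree (n : ℕ) : (rho n).natDegree ≤ n := by
  refine le_trans (natDegree_C_mul_le _ _) (le_trans (natDegree_iterate_derivative _ _) ?_)
  have := GG_natDegree n
  omega

lemma rho_ortho (n : ℕ) (q : ℝ[X]) (hdeg : q.natDegree ≤ n)
    (h0 : q.eval 0 = 0) (h1 : q.eval 1 = 0) : PI (rho n * q) = 0 := by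
  rw [rho, mul_assoc, PI_smul, GG_ortho n q hdeg h0 h1, mul_zero]

lemma rho_final (n : ℕ) (hn : 1 ≤ n) :
    PI (rho n * (1 - X)) = (-1)^(n+1) / (n * (n+1) * (n+2)) := by
  have key : PI (Polynomial.derivative^[n+1] (GG n) * (1 - X)) = -(Nat.factorial n) := by
    have hA : Polynomial.derivative^[n+1] (GG n)
        = derivative (Polynomial.derivative^[n] (GG n)) := Function.iterate_succ_apply' _ _ _
    rw [hA, PI_ibp]
    have hd : (Polynomial.derivative^[n] (GG n)) * derivative (1 - X : ℝ[X])
        = C (-1) * Polynomial.derivative^[n] (GG n) := by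
      simp only [derivative_sub, derivative_one, derivative_X, zero_sub]
      simp [mul_comm]
    rw [hd, PI_smul]
    have hPIA : PI (Polynomial.derivative^[n] (GG n)) = 0 := by
      have h2 : Polynomial.derivative^[n] (GG n)
          = derivative (Polynomial.derivative^[n-1] (GG n)) := by
        conv_lhs => rw [show Polynomial.derivative^[n] (GG n)
          = Polynomial.derivative^[(n-1)+1] (GG n) by rw [show n - 1 + 1 = n by omega],
          Function.iterate_succ_apply']
      rw [h2, PI_derivative, GG_vanish0 n (n-1) (by omega), GG_vanish1 n (n-1) (by omega)]
      ring
    rw [hPIA, GG_Dn_eval0]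
    simp
  rw [rho, mul_assoc, PI_smul, key, kap]
  have hfacs : (Nat.factorial (n+1) : ℝ) = (n+1) * Nat.factorial n := by
    rw [Nat.factorial_succ]; push_cast; ring
  have hfac : (Nat.factorial n : ℝ) ≠ 0 := by positivity
  have hn0 : (n:ℝ) ≠ 0 := Nat.cast_ne_zero.2 (by omega)
  rw [hfacs, pow_succ]
  field_simp

lemma rho_div (n : ℕ) (hn : 1 ≤ n) :
    ∃ q : ℝ[X], (q = 0 ∨ q.natDegree + 2 ≤ n) ∧ X * (1 - X) * q = X - rho n := by
  set D : ℝ[X] := X - rho n with hD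
  have hD0 : D.eval 0 = 0 := by simp [hD, rho_eval0]
  have hD1 : D.eval 1 = 0 := by simp [hD, rho_eval1 n hn]
  have hdvd0 : (X - C (0:ℝ)) ∣ D := (dvd_iff_isRoot).2 hD0
  have hdvd1 : (X - C (1:ℝ)) ∣ D := (dvd_iff_isRoot).2 hD1
  have hcop : IsCoprime (X - C (0:ℝ)) (X - C (1:ℝ)) := ⟨1, -1, by ring_nf; simp⟩
  obtain ⟨d, hd⟩ := hcop.mul_dvd hdvd0 hdvd1
  refine ⟨-d, ?_, by rw [hd]; ring_nf; rw [map_zero, map_one]; ring⟩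
  rcases eq_or_ne d 0 with h0 | h0
  · left; rw [h0, neg_zero]
  · right
    have hDne : D ≠ 0 := by
      rw [hd]
      exact mul_ne_zero (mul_ne_zero (X_sub_C_ne_zero 0) (X_sub_C_ne_zero 1)) h0
    have hdegD : D.natDegree ≤ n := by
      refine le_trans (natDegree_sub_le _ _) ?_
      simp only [natDegree_X]
      have := rho_natDegree n
      omega
    have h2 : ((X - C (0:ℝ)) * (X - C 1)).natDegree = 2 := by
      rw [natDegree_mul (X_sub_C_ne_zero 0) (X_sub_C_ne_zero 1), natDegree_X_sub_C,
        natDegree_X_sub_C]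
    rw [hd, natDegree_mul (mul_ne_zero (X_sub_C_ne_zero 0) (X_sub_C_ne_zero 1)) h0,
      h2] at hdegD
    rw [natDegree_neg]
    omega

/-! ### The `L²` glue -/

abbrev μI : Measure ℝ := volume.restrict (Set.Ioo (0 : ℝ) 1)

instance : IsFiniteMeasure μI := by
  constructor
  rw [Measure.restrict_apply_univ, Real.volume_Ioo]
  norm_num

def indP (P : ℝ[X]) : ℝ → ℝ := fun x => Set.indicator (Set.Ico (0:ℝ) 1) (fun y => P.eval y) x

lemma indP_ae (P : ℝ[X]) : indP P =ᵐ[μI] fun x => P.eval x := by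
  rw [Filter.EventuallyEq, ae_restrict_iff' measurableSet_Ioo]
  filter_upwards with x hx
  exact Set.indicator_of_mem (Set.mem_Ico.2 ⟨le_of_lt hx.1, hx.2⟩) _

lemma memL2_eval (P : ℝ[X]) : MemLp (fun x => P.eval x) 2 μI := by
  obtain ⟨C, hC⟩ := (isCompact_Icc (a := (0:ℝ)) (b := 1)).exists_bound_of_continuousOn
    (P.continuousOn)
  refine MemLp.of_bound P.continuous.aestronglyMeasurable (max C 0) ?_
  rw [ae_restrict_iff' measurableSet_Ioo]
  filter_upwards with x hx
  exact le_trans (hC x (Set.mem_Icc.2 ⟨le_of_lt hx.1, le_of_lt hx.2⟩)) (le_max_left _ _)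

lemma memL2_indP (P : ℝ[X]) : MemLp (indP P) 2 μI :=
  (memLp_congr_ae (indP_ae P)).2 (memL2_eval P)

lemma inner_toL2I (P Q : ℝ[X]) :
    (inner ℝ (toL2I (indP P)) (toL2I (indP Q)) : ℝ) = PI (P * Q) := by
  rw [toL2I, dif_pos (memL2_indP P), toL2I, dif_pos (memL2_indP Q)]
  rw [MeasureTheory.L2.inner_def]
  have h1 : ∀ᵐ x ∂μI, ((memL2_indP P).toLp (indP P)) x = P.eval x :=
    ((memL2_indP P).coeFn_toLp).trans (indP_ae P)
  have h2 : ∀ᵐ x ∂μI, ((memL2_indP Q).toLp (indP Q)) x = Q.eval x :=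
    ((memL2_indP Q).coeFn_toLp).trans (indP_ae Q)
  rw [integral_congr_ae (g := fun x => (P*Q).eval x) ?_]
  · rw [PI, intervalIntegral.integral_of_le zero_le_one,
      ← MeasureTheory.integral_Ioc_eq_integral_Ioo]
  · filter_upwards [h1, h2] with x hx1 hx2
    rw [hx1, hx2]
    simp [RCLike.inner_apply, eval_mul, mul_comm]

lemma rI_eq : rI = toL2I (indP X) := by
  rw [rI]
  congr 1
  funext x
  rw [indP]
  congr 1
  funext y
  simp

lemma lI_eq : lI = toL2I (indP (1 - X)) := by
  rw [lI]
  congr 1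
  funext x
  rw [indP]
  congr 1
  funext y
  simp

end OrthoPolyAux

namespace OrthoPolyAux
open OrthoPoly Polynomial

theorem inner_rn_ln_aux (n : ℕ) (hn : 1 ≤ n) :
    (inner ℝ (rI - projC (Usub n) rI) (lI - projC (Usub n) lI) : ℝ) =
      (-1) ^ (n + 1) / (n * (n + 1) * (n + 2)) := by
  classical
  obtain ⟨q, hqdeg, hqeq⟩ := rho_div n hn
  set π : L2I := toL2I (fun x => Set.indicator (Set.Ico (0:ℝ) 1)
      (fun y => y * (1 - y) * q.eval y) x) with hπdef
  have hπ_eq : π = toL2I (indP (X * (1 - X) * q)) := by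
    rw [hπdef]
    congr 1
    funext x
    rw [indP]
    congr 1
    funext y
    simp
  have hπU : π ∈ Usub n := Submodule.subset_span ⟨q, hqdeg, rfl⟩
  have hπK : π ∈ (Usub n).topologicalClosure := Submodule.le_topologicalClosure _ hπU
  -- orthogonality of rI - π to Usub n
  have horto : ∀ g ∈ Usub n, (inner ℝ (rI - π) g : ℝ) = 0 := by
    intro g hg
    induction hg using Submodule.span_induction with
    | mem g hgS =>
      obtain ⟨p, hpdeg, rfl⟩ := hgS
      have hg_eq : toL2I (fun x => Set.indicator (Set.Ico (0:ℝ) 1)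
          (fun y => y * (1 - y) * p.eval y) x) = toL2I (indP (X * (1 - X) * p)) := by
        congr 1
        funext x
        rw [indP]
        congr 1
        funext y
        simp
      rw [hg_eq, inner_sub_left, rI_eq, hπ_eq, inner_toL2I, inner_toL2I]
      have hfac : X * (X * (1 - X) * p) - (X * (1 - X) * q) * (X * (1 - X) * p)
          = rho n * (X * (1 - X) * p) := by
        have : X - rho n = X * (1 - X) * q := hqeq.symm
        linear_combination (X * (1 - X) * p) * this
      rw [← PI_sub, hfac]
      have hW2 : (X * (1 - X) : ℝ[X]).natDegree ≤ 2 := by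
        refine le_trans natDegree_mul_le ?_
        have : ((1:ℝ[X]) - X).natDegree ≤ 1 :=
          le_trans (natDegree_sub_le _ _) (by simp)
        simp only [natDegree_X]
        omega
      have hdeg : (X * (1 - X) * p).natDegree ≤ n := by
        rcases hpdeg with h | h
        · subst h
          simp
        · refine le_trans natDegree_mul_le ?_
          omega
      exact rho_ortho n _ hdeg (by simp) (by simp)
    | zero => rw [inner_zero_right]
    | add x y _ _ hx hy => rw [inner_add_right, hx, hy, add_zero]
    | smul c x _ hx => rw [inner_smul_right, hx, mul_zero]
  have hKperp : rI - π ∈ ((Usub n).topologicalClosure)ᗮ := by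
    have hoeq : ((Usub n).topologicalClosure)ᗮ = (Usub n)ᗮ := by
      rw [← Submodule.orthogonal_orthogonal_eq_closure, Submodule.triorthogonal_eq_orthogonal]
    rw [hoeq, Submodule.mem_orthogonal']
    exact horto
  have hproj_r : projC (Usub n) rI = π := by
    rw [projC]
    exact Submodule.eq_starProjection_of_mem_orthogonal hπK hKperp
  have hPl : projC (Usub n) lI ∈ (Usub n).topologicalClosure := by
    rw [projC]
    exact SetLike.coe_mem _
  rw [hproj_r, inner_sub_right,
    (Submodule.mem_orthogonal' _ _).1 hKperp _ hPl, sub_zero,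
    inner_sub_left, rI_eq, lI_eq, hπ_eq, inner_toL2I, inner_toL2I, ← PI_sub]
  have hfac : X * (1 - X) - (X * (1 - X) * q) * (1 - X) = rho n * (1 - X) := by
    have h : X - rho n = X * (1 - X) * q := hqeq.symm
    linear_combination ((1 - X : ℝ[X])) * h
  rw [hfac, rho_final n hn]

end OrthoPolyAux

open OrthoPoly in
theorem inner_rn_ln (n : ℕ) (hn : 1 ≤ n) :
    (inner ℝ (rI - projC (Usub n) rI) (lI - projC (Usub n) lI) : ℝ) =
      (-1) ^ (n + 1) / (n * (n + 1) * (n + 2)) :=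
  OrthoPolyAux.inner_rn_ln_aux n hn
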